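/- Let 0 < α < 1, T > 0, N a positive integer, and r ≥ 1, and let p^{(n)}_{n−i} be the coefficients built from the L1 weights on the graded mesh t_n = T(n/N)^r. Then all these coefficients are nonnegative: p^{(n)}_{n−i} ≥ 0 for every 1 ≤ i ≤ n ≤ N. -/

import Mathlib

noncomputable section

/-- The graded mesh `t_n = T (n/N)^r` on `[0,T]`. -/
def gmesh (T r : ℝ) (N n : ℕ) : ℝ := T * ((n : ℝ) / (N : ℝ)) ^ r

/-- The step sizes `τ_n = t_n - t_{n-1}` of the graded mesh. -/
def gstep (T r : ℝ) (N n : ℕ) : ℝ := gmesh T r N n - gmesh T r N (n - 1)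

/-- The L1 weights
`d_{n,k} = ((t_n − t_{n−k})^{1−α} − (t_n − t_{n−k+1})^{1−α})/τ_{n−k+1}`. -/
def L1w (α T r : ℝ) (N n k : ℕ) : ℝ :=
  ((gmesh T r N n - gmesh T r N (n - k)) ^ (1 - α)
      - (gmesh T r N n - gmesh T r N (n - k + 1)) ^ (1 - α)) / gstep T r N (n - k + 1)

/-- The coefficients `b^{(n)}_{n−i} = d_{n,n−i+1}/Γ(2−α)`; here `bcoef α T r N n i`
denotes `b^{(n)}_{n-i}`. -/
def bcoef (α T r : ℝ) (N n i : ℕ) : ℝ := L1w α T r N n (n - i + 1) / Real.Gamma (2 - α)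

/-- Auxiliary definition: `pcoefAux α T r N n m` is the coefficient `p^{(n)}_m`,
defined by `p^{(n)}_0 = Γ(2−α) τ_n^α` and, for `m = n - i` with `1 ≤ i ≤ n−1`,
`p^{(n)}_{n−i} = Γ(2−α) τ_i^α Σ_{k=i+1}^{n} (b^{(k)}_{k−i−1} − b^{(k)}_{k−i}) p^{(n)}_{n−k}`
(the sum over `k ∈ [i+1, n]` is re-indexed by `j = n - k ∈ [0, n-i-1]`). -/
def pcoefAux (α T r : ℝ) (N n : ℕ) : ℕ → ℝ
  | 0 => Real.Gamma (2 - α) * (gstep T r N n) ^ α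
  | (m + 1) =>
      Real.Gamma (2 - α) * (gstep T r N (n - (m + 1))) ^ α *
        ∑ j ∈ (Finset.range (m + 1)).attach,
          (bcoef α T r N (n - j.1) (n - m) - bcoef α T r N (n - j.1) (n - (m + 1))) *
            pcoefAux α T r N n j.1
  decreasing_by
    have := j.2
    simp only [Finset.mem_range] at this
    omega

/-- `pcoef α T r N n i` is the coefficient `p^{(n)}_{n−i}` for `1 ≤ i ≤ n`. -/
def pcoef (α T r : ℝ) (N n i : ℕ) : ℝ := pcoefAux α T r N n (n - i)

lemma gmesh_lt {T r : ℝ} {N : ℕ} (hT : 0 < T) (hr : 1 ≤ r) (hN : 0 < N)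
    {a b : ℕ} (h : a < b) : gmesh T r N a < gmesh T r N b := by
  unfold gmesh
  have hr0 : 0 < r := lt_of_lt_of_le one_pos hr
  have hN0 : (0 : ℝ) < (N : ℝ) := by exact_mod_cast hN
  apply mul_lt_mul_of_pos_left _ hT
  apply Real.rpow_lt_rpow (by positivity) _ hr0
  apply div_lt_div_of_pos_right _ hN0
  exact_mod_cast h

lemma gmesh_le {T r : ℝ} {N : ℕ} (hT : 0 < T) (hr : 1 ≤ r) (hN : 0 < N)
    {a b : ℕ} (h : a ≤ b) : gmesh T r N a ≤ gmesh T r N b := by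
  rcases lt_or_eq_of_le h with h | h
  · exact (gmesh_lt hT hr hN h).le
  · rw [h]

lemma gstep_nonneg {T r : ℝ} {N : ℕ} (hT : 0 < T) (hr : 1 ≤ r) (hN : 0 < N)
    (n : ℕ) : 0 ≤ gstep T r N n := by
  unfold gstep
  have := gmesh_le hT hr hN (Nat.sub_le n 1)
  linarith

/-- The L1 weights decrease in `k`: `d_{n,k+1} ≤ d_{n,k}`. -/
lemma L1w_antitone {α T r : ℝ} {N : ℕ} (hα0 : 0 < α) (hα1 : α < 1)
    (hT : 0 < T) (hr : 1 ≤ r) (hN : 0 < N)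
    {k κ : ℕ} (hκ : 1 ≤ κ) (hκk : κ + 1 ≤ k) :
    L1w α T r N k (κ + 1) ≤ L1w α T r N k κ := by
  unfold L1w gstep
  have e1 : k - (κ + 1) = k - κ - 1 := by omega
  have e5 : k - κ - 1 + 1 = k - κ := by omega
  have e4 : k - κ + 1 - 1 = k - κ := by omega
  rw [e1, e5, e4]
  set t : ℕ → ℝ := gmesh T r N with ht
  set x : ℝ := t k - t (k - κ + 1) with hx
  set y : ℝ := t k - t (k - κ) with hy
  set z : ℝ := t k - t (k - κ - 1) with hz
  have hx0 : 0 ≤ x := by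
    have : t (k - κ + 1) ≤ t k := gmesh_le hT hr hN (by omega)
    simp only [hx]; linarith
  have hxy : x < y := by
    have : t (k - κ) < t (k - κ + 1) := gmesh_lt hT hr hN (by omega)
    simp only [hx, hy]; linarith
  have hyz : y < z := by
    have : t (k - κ - 1) < t (k - κ) := gmesh_lt hT hr hN (by omega)
      -- indices: k - (κ+1) < k - κ since κ + 1 ≤ k
    simp only [hy, hz]; linarith
  have hz0 : (0 : ℝ) ≤ z := le_trans hx0 (le_trans hxy.le hyz.le)
  have key := (Real.concaveOn_rpow (by linarith : (0:ℝ) ≤ 1 - α)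
      (by linarith : (1 : ℝ) - α ≤ 1)).slope_anti_adjacent
      (Set.mem_Ici.2 hx0) (Set.mem_Ici.2 hz0) hxy hyz
  have d1 : t (k - κ) - t (k - κ - 1) = z - y := by simp only [hy, hz]; ring
  have d2 : t (k - κ + 1) - t (k - κ) = y - x := by simp only [hx, hy]; ring
  rw [d1, d2]
  exact key

lemma pcoefAux_nonneg {α T r : ℝ} {N : ℕ} (hα0 : 0 < α) (hα1 : α < 1)
    (hT : 0 < T) (hr : 1 ≤ r) (hN : 0 < N) (n : ℕ) :
    ∀ m, m + 1 ≤ n → 0 ≤ pcoefAux α T r N n m := by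
  have hΓ : 0 < Real.Gamma (2 - α) := Real.Gamma_pos_of_pos (by linarith)
  intro m
  induction m using Nat.strong_induction_on with
  | _ m ih =>
    intro hm
    match m with
    | 0 =>
        rw [pcoefAux]
        exact mul_nonneg hΓ.le (Real.rpow_nonneg (gstep_nonneg hT hr hN n) α)
    | Nat.succ m =>
        rw [pcoefAux]
        apply mul_nonneg (mul_nonneg hΓ.le
          (Real.rpow_nonneg (gstep_nonneg hT hr hN _) α))
        apply Finset.sum_nonneg
        intro j _
        have hj : j.1 < m + 1 := Finset.mem_range.1 j.2
        apply mul_nonneg _ (ih j.1 (by omega) (by omega))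
        unfold bcoef
        have e1 : n - j.1 - (n - m) + 1 = m - j.1 + 1 := by omega
        have e2 : n - j.1 - (n - (m + 1)) + 1 = (m - j.1 + 1) + 1 := by omega
        rw [e1, e2, div_sub_div_same]
        apply div_nonneg _ hΓ.le
        rw [sub_nonneg]
        exact L1w_antitone hα0 hα1 hT hr hN (by omega) (by omega)

/-- nonnegativity of the coefficients `p^{(n)}_{n−i}` for `1 ≤ i ≤ n ≤ N`. -/
theorem pcoef_nonneg
    (α T r : ℝ) (N : ℕ) (hα0 : 0 < α) (hα1 : α < 1) (hT : 0 < T) (hr : 1 ≤ r) (hN : 0 < N)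
    (n i : ℕ) (hi : 1 ≤ i) (hin : i ≤ n) (hnN : n ≤ N) :
    0 ≤ pcoef α T r N n i := by
  exact pcoefAux_nonneg hα0 hα1 hT hr hN n (n - i) (by omega)
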